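/- For all non-negative integers n, q, t, s, p with q ≥ 1, t < s, s + p < n, (s, p) ≠ (0, 0), and every sequence x ∈ A_q^n with more than one run, the strict inequality |B_{t,s,p}(x)| > Σ_{i=0}^{t+p} C(n+t-s, i) (q-1)^i holds. -/

import Mathlib

/-- The subsequence of `x` indexed by the finite set `S` of size `m`,
entries taken in increasing index order. -/
def subseqOf {q n m : ℕ} (x : Fin n → Fin q) (S : Finset (Fin n)) (h : S.card = m) :
    Fin m → Fin q :=
  fun i => x ((S.orderIsoOfFin h i : Fin n))

/-- The insertion/deletion/substitution ball of `x ∈ A_q^n`: all sequences `z` of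
length `m` such that some subsequence of `x` of length `n - s` is within Hamming
distance `p` of some subsequence of `z` of the same length.  For the `t`-insertion
`s`-deletion `p`-substitution ball `B_{t,s,p}(x)`, take `m = n + t - s`. -/
def idsBall (q s p : ℕ) {n m : ℕ} (x : Fin n → Fin q) : Set (Fin m → Fin q) :=
  { z | ∃ (S1 : Finset (Fin n)) (S2 : Finset (Fin m))
      (h1 : S1.card = n - s) (h2 : S2.card = n - s),
      hammingDist (subseqOf x S1 h1) (subseqOf z S2 h2) ≤ p }

lemma subseq_eq_comp {q n k : ℕ} (x : Fin n → Fin q) {g : Fin k → Fin n} (hg : StrictMono g)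
    {S : Finset (Fin n)} (hS : ∀ i, g i ∈ S) (h : S.card = k) :
    subseqOf x S h = x ∘ g := by
  have hu := Finset.orderEmbOfFin_unique h hS hg
  funext i
  simp only [subseqOf, Finset.coe_orderIsoOfFin_apply, ← hu, Function.comp_apply]

def othFn {k : ℕ} (a : Fin (k+2)) : Fin (k+2) :=
  if (a : ℕ) = 0 then ⟨1, by omega⟩ else ⟨0, by omega⟩

lemma othFn_ne {k : ℕ} (a : Fin (k+2)) : othFn a ≠ a := by
  unfold othFn
  split_ifs with h
  · intro hcon
    rw [Fin.ext_iff] at hcon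
    simp at hcon
    omega
  · intro hcon
    rw [Fin.ext_iff] at hcon
    simp at hcon
    omega

lemma exists_g {q n : ℕ} (x : Fin n → Fin q) (hx : ∃ i j, x i ≠ x j) {k : ℕ}
    (hk1 : 1 ≤ k) (hkn : k < n) :
    ∃ g : Fin k → Fin n, StrictMono g ∧
      ∃ c : Fin k, x (g c) ≠ x (Fin.castLE hkn.le c) := by
  classical
  have h0n : 0 < n := by omega
  obtain ⟨i, j, hij⟩ := hx
  have hex : ∃ b : ℕ, ∃ hb : b < n, x ⟨b, hb⟩ ≠ x ⟨0, h0n⟩ := by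
    by_cases h : x i = x ⟨0, h0n⟩
    · exact ⟨j, j.2, fun hj => hij (by rw [h, ← hj])⟩
    · exact ⟨i, i.2, by simpa using h⟩
  have hex2 : ∃ b, ∃ hbn : b < n, 1 ≤ b ∧ x ⟨b, hbn⟩ ≠ x ⟨0, h0n⟩ ∧
      ∀ a, a < b → ∀ ha : a < n, x ⟨a, ha⟩ = x ⟨0, h0n⟩ := by
    obtain ⟨hbn, hbne⟩ := Nat.find_spec hex
    refine ⟨Nat.find hex, hbn, ?_, hbne, ?_⟩
    · rcases Nat.eq_zero_or_pos (Nat.find hex) with h | h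
      · exact absurd (congrArg x (Fin.ext (show Nat.find hex = 0 from h))) hbne
      · exact h
    · intro a hab ha
      by_contra h
      exact Nat.find_min hex hab ⟨ha, h⟩
  obtain ⟨b, hbn, hb1, hbne, hmin⟩ := hex2
  by_cases hbk : b < k
  · refine ⟨fun i => if (i : ℕ) < b - 1 then ⟨i, by omega⟩ else ⟨(i : ℕ) + 1, by omega⟩,
      ?_, ⟨b - 1, by omega⟩, ?_⟩
    · intro i j hij
      simp only
      split_ifs with h1 h2 h2 <;> rw [Fin.mk_lt_mk] <;> [exact hij; omega; omega; omega]
    · simp only [lt_irrefl, if_neg (lt_irrefl (b - 1))]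
      have e1 : (⟨b - 1 + 1, by omega⟩ : Fin n) = ⟨b, hbn⟩ := by
        rw [Fin.mk.injEq]; omega
      have e2 : x (Fin.castLE hkn.le ⟨b - 1, by omega⟩) = x ⟨0, h0n⟩ := by
        have h3 : Fin.castLE hkn.le (⟨b - 1, by omega⟩ : Fin k) = (⟨b - 1, by omega⟩ : Fin n) := Fin.ext (by simp)
        rw [h3]
        exact hmin (b - 1) (by omega) (by omega)
      rw [e1, e2]
      exact hbne
  · push_neg at hbk
    refine ⟨fun i => if (i : ℕ) < k - 1 then ⟨i, by omega⟩ else ⟨b, hbn⟩,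
      ?_, ⟨k - 1, by omega⟩, ?_⟩
    · intro i j hij
      simp only
      split_ifs with h1 h2 h2 <;> rw [Fin.mk_lt_mk]
      · exact hij
      · omega
      · omega
      · exfalso
        have hi := i.2; have hj := j.2
        have hlt : (i : ℕ) < (j : ℕ) := hij
        omega
    · simp only [lt_irrefl, if_neg (lt_irrefl (k - 1))]
      have e2 : x (Fin.castLE hkn.le ⟨k - 1, by omega⟩) = x ⟨0, h0n⟩ := by
        have h3 : Fin.castLE hkn.le (⟨k - 1, by omega⟩ : Fin k) = (⟨k - 1, by omega⟩ : Fin n) := Fin.ext (by simp)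
        rw [h3]
        exact hmin (k - 1) (by omega) (by omega)
      rw [e2]
      exact hbne


lemma hamming_ball_count {m k r : ℕ} (y : Fin m → Fin (k+1)) :
    ∑ i ∈ Finset.range (r+1), m.choose i * k ^ i ≤
      (Finset.univ.filter fun z : Fin m → Fin (k+1) => hammingDist z y ≤ r).card := by
  classical
  set D := (Finset.univ.powerset.filter (fun T : Finset (Fin m) => T.card ≤ r)).sigma
      (fun T => (Finset.univ : Finset ({i // i ∈ T} → Fin k))) with hD
  have hcard : D.card = ∑ i ∈ Finset.range (r+1), m.choose i * k ^ i := by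
    rw [hD, Finset.card_sigma]
    have h1 : ∀ T ∈ Finset.univ.powerset.filter (fun T : Finset (Fin m) => T.card ≤ r),
        (Finset.univ : Finset ({i // i ∈ T} → Fin k)).card = k ^ T.card := by
      intro T _
      rw [Finset.card_univ, Fintype.card_fun, Fintype.card_fin, Fintype.card_coe]
    rw [Finset.sum_congr rfl h1]
    rw [← Finset.sum_fiberwise_of_maps_to (g := fun T : Finset (Fin m) => T.card)
        (t := Finset.range (r+1)) (fun T hT => by
          simp only [Finset.mem_filter] at hT
          exact Finset.mem_range.2 (Nat.lt_succ_of_le hT.2))]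
    refine Finset.sum_congr rfl fun j hj => ?_
    have hset : ((Finset.univ.powerset.filter (fun T : Finset (Fin m) => T.card ≤ r)).filter
        (fun T => T.card = j)) = Finset.powersetCard j Finset.univ := by
      ext T
      simp only [Finset.mem_filter, Finset.mem_powerset, Finset.mem_powersetCard]
      constructor
      · rintro ⟨⟨h1, _⟩, h3⟩; exact ⟨h1, h3⟩
      · rintro ⟨h1, h3⟩
        exact ⟨⟨h1, h3 ▸ Nat.lt_succ_iff.1 (Finset.mem_range.1 hj)⟩, h3⟩
    rw [hset]
    have : ∀ T ∈ Finset.powersetCard j (Finset.univ : Finset (Fin m)),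
        k ^ T.card = k ^ j := by
      intro T hT
      rw [(Finset.mem_powersetCard.1 hT).2]
    rw [Finset.sum_congr rfl this, Finset.sum_const, Finset.card_powersetCard,
      Finset.card_univ, Fintype.card_fin, smul_eq_mul]
  rw [← hcard]
  apply Finset.card_le_card_of_injOn
    (fun σ => fun i => if h : i ∈ σ.1 then (y i).succAbove (σ.2 ⟨i, h⟩) else y i)
  · rintro ⟨T, g⟩ hTg
    simp only [hD, Finset.mem_coe, Finset.mem_sigma, Finset.mem_filter, Finset.mem_powerset] at hTg
    simp only [Finset.mem_coe, Finset.mem_filter, Finset.mem_univ, true_and]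
    calc hammingDist _ y ≤ T.card := by
          unfold hammingDist
          apply Finset.card_le_card
          intro i hi
          simp only [Finset.mem_filter, Finset.mem_univ, true_and] at hi
          by_contra hiT
          exact hi (by simp [hiT])
      _ ≤ r := hTg.1.2
  · rintro ⟨T, g⟩ _ ⟨T', g'⟩ _ hfe
    have key : ∀ (T : Finset (Fin m)) (g : {i // i ∈ T} → Fin k) (i : Fin m),
        ((fun i => if h : i ∈ T then (y i).succAbove (g ⟨i, h⟩) else y i) i ≠ y i) ↔ i ∈ T := by
      intro T g i
      constructor
      · intro h; by_contra hiT; exact h (by simp [hiT])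
      · intro h; simp only [dif_pos h]; exact Fin.succAbove_ne (y i) _
    have hT : T = T' := by
      ext i
      rw [← key T g i, ← key T' g' i]
      simp only at hfe
      rw [hfe]
    subst hT
    have hg : g = g' := by
      funext ⟨i, hi⟩
      have := congrFun hfe i
      simp only [dif_pos hi] at this
      exact Fin.succAbove_right_injective this
    rw [hg]

lemma mem_idsBall_of_close {q n m s p t : ℕ} (hmn : m ≤ n) (hm : m = (n - s) + t)
    (x : Fin n → Fin q) (z : Fin m → Fin q)
    (hz : hammingDist z (x ∘ Fin.castLE hmn) ≤ t + p) :
    z ∈ (idsBall q s p x : Set (Fin m → Fin q)) := by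
  classical
  set y1 : Fin m → Fin q := x ∘ Fin.castLE hmn with hy1
  set M : Finset (Fin m) := Finset.univ.filter (fun i => z i ≠ y1 i) with hMdef
  have hM : M.card ≤ t + p := hz
  obtain ⟨A, hAM, hA⟩ := Finset.exists_subset_card_eq (Nat.sub_le M.card p)
  have hAt : A.card ≤ t := by omega
  obtain ⟨T, hAT, -, hT⟩ := Finset.exists_subsuperset_card_eq (Finset.subset_univ A)
    hAt (by rw [Finset.card_univ, Fintype.card_fin]; omega)
  set S2 : Finset (Fin m) := Tᶜ with hS2def
  have h2 : S2.card = n - s := by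
    rw [hS2def, Finset.card_compl, hT, Fintype.card_fin]; omega
  set e : Fin (n - s) ↪o Fin m := S2.orderEmbOfFin h2 with he
  set S1 : Finset (Fin n) := S2.map (Fin.castLEEmb hmn) with hS1def
  have h1 : S1.card = n - s := by rw [hS1def, Finset.card_map, h2]
  refine ⟨S1, S2, h1, h2, ?_⟩
  have hsx : subseqOf x S1 h1 = x ∘ (fun i => Fin.castLE hmn (e i)) := by
    apply subseq_eq_comp x ((Fin.strictMono_castLE hmn).comp e.strictMono)
    intro i
    rw [hS1def, Finset.mem_map]
    exact ⟨e i, Finset.orderEmbOfFin_mem _ _ _, rfl⟩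
  have hsz : subseqOf z S2 h2 = z ∘ e := by
    apply subseq_eq_comp z e.strictMono
    intro i; exact Finset.orderEmbOfFin_mem _ _ _
  rw [hsx, hsz]
  have : hammingDist (x ∘ fun i => Fin.castLE hmn (e i)) (z ∘ e)
      = (Finset.univ.filter (fun i : Fin (n-s) => z (e i) ≠ y1 (e i))).card := by
    unfold hammingDist
    congr 1
    apply Finset.filter_congr
    intro i _
    simp only [Function.comp_apply, hy1, ne_comm]
  rw [this]
  calc (Finset.univ.filter (fun i : Fin (n-s) => z (e i) ≠ y1 (e i))).card
      ≤ (M \ A).card := by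
        apply Finset.card_le_card_of_injOn (fun i => e i)
        · intro i hi
          simp only [Finset.mem_coe, Finset.mem_filter, Finset.mem_univ, true_and] at hi
          rw [Finset.mem_coe, Finset.mem_sdiff]
          constructor
          · rw [hMdef]; simp only [Finset.mem_filter, Finset.mem_univ, true_and]; exact hi
          · intro hiA
            have : e i ∈ T := hAT hiA
            have : e i ∈ S2 := Finset.orderEmbOfFin_mem _ _ _
            rw [hS2def, Finset.mem_compl] at this
            exact this (hAT hiA)
        · exact fun a _ b _ hab => e.injective hab
    _ ≤ p := by rw [Finset.card_sdiff_of_subset hAM, hA]; omega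

/-- strict inequality for `B_{t,s,p}(x)` in the case `t < s`. -/
theorem idsBall_t_lt_s_strict (n q t s p : ℕ) (hq : 1 ≤ q) (hts : t < s)
    (hsp : s + p < n) (hsp0 : (s, p) ≠ (0, 0))
    (x : Fin n → Fin q) (hx : ∃ i j, x i ≠ x j) :
    (idsBall q s p x : Set (Fin (n + t - s) → Fin q)).ncard >
      ∑ i ∈ Finset.range (t + p + 1), (n + t - s).choose i * (q - 1) ^ i := by
  classical
  obtain ⟨i0, j0, hij0⟩ := hx
  have hq2 : 2 ≤ q := by
    by_contra h
    push_neg at h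
    interval_cases q
    · exact hij0 (Subsingleton.elim _ _)
  obtain ⟨k, rfl⟩ : ∃ k, q = k + 2 := ⟨q - 2, by omega⟩
  set m := n + t - s with hmdef
  have hm : m = (n - s) + t := by omega
  have hmn : m ≤ n := by omega
  have hks : 1 ≤ n - s := by omega
  have hkn : n - s < n := by omega
  have hksm : n - s ≤ m := by omega
  set y1 : Fin m → Fin (k+2) := x ∘ Fin.castLE hmn with hy1
  obtain ⟨g, hg, c, hgc⟩ := exists_g x ⟨i0, j0, hij0⟩ hks hkn
  set Mu : Finset (Fin (n - s)) :=
    Finset.univ.filter (fun i => x (g i) ≠ x (Fin.castLE hkn.le i)) with hMudef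
  have hMu1 : 1 ≤ Mu.card := Finset.card_pos.2 ⟨c, by simp [hMudef, hgc]⟩
  have hMuk : Mu.card ≤ n - s := by
    calc Mu.card ≤ (Finset.univ : Finset (Fin (n - s))).card :=
          Finset.card_le_card (Finset.filter_subset _ _)
      _ = n - s := by rw [Finset.card_univ, Fintype.card_fin]
  obtain ⟨E, hEMu, hE⟩ := Finset.exists_subset_card_eq
    (show p + 1 - Mu.card ≤ Muᶜ.card by
      rw [Finset.card_compl, Fintype.card_fin]; omega)
  set zst : Fin m → Fin (k+2) := fun i =>
    if h : (i : ℕ) < n - s then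
      (if (⟨i, h⟩ : Fin (n - s)) ∈ E then othFn (x (Fin.castLE hkn.le ⟨i, h⟩))
       else x (g ⟨i, h⟩))
    else othFn (y1 i) with hzst
  have hzval : ∀ (i : Fin m) (h : (i : ℕ) < n - s),
      zst i = (if (⟨i, h⟩ : Fin (n - s)) ∈ E then othFn (x (Fin.castLE hkn.le ⟨i, h⟩))
        else x (g ⟨i, h⟩)) := by
    intro i h
    rw [hzst]
    exact dif_pos h
  have hzval2 : ∀ (i : Fin m), ¬ ((i : ℕ) < n - s) → zst i = othFn (y1 i) := by
    intro i h
    rw [hzst]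
    exact dif_neg h
  -- membership of zst in the ball
  have h1 : (Finset.univ.map ⟨g, hg.injective⟩ : Finset (Fin n)).card = n - s := by
    rw [Finset.card_map, Finset.card_univ, Fintype.card_fin]
  have h2 : (Finset.univ.map (Fin.castLEEmb hksm) : Finset (Fin m)).card = n - s := by
    rw [Finset.card_map, Finset.card_univ, Fintype.card_fin]
  have hzmem : zst ∈ (idsBall (k+2) s p x : Set (Fin m → Fin (k+2))) := by
    refine ⟨_, _, h1, h2, ?_⟩
    have hsx : subseqOf x _ h1 = x ∘ g :=
      subseq_eq_comp x hg (fun i => Finset.mem_map_of_mem _ (Finset.mem_univ i)) h1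
    have hsz : subseqOf zst _ h2 = zst ∘ Fin.castLE hksm :=
      subseq_eq_comp zst (Fin.strictMono_castLE hksm)
        (fun i => Finset.mem_map.2 ⟨i, Finset.mem_univ i, rfl⟩) h2
    rw [hsx, hsz]
    calc hammingDist (x ∘ g) (zst ∘ Fin.castLE hksm) ≤ E.card := by
          unfold hammingDist
          apply Finset.card_le_card
          intro i hi
          simp only [Finset.mem_filter, Finset.mem_univ, true_and,
            Function.comp_apply] at hi
          by_contra hiE
          apply hi
          have hlt : ((Fin.castLE hksm i : Fin m) : ℕ) < n - s := i.2
          rw [hzval _ hlt]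
          have heta : (⟨((Fin.castLE hksm i : Fin m) : ℕ), hlt⟩ : Fin (n - s)) = i :=
            Fin.ext rfl
          rw [heta, if_neg hiE]
      _ ≤ p := by omega
  -- zst is far from y1
  have hfar : t + p < hammingDist zst y1 := by
    have himg : ∀ i : Fin m, i ∈ Finset.univ.map (Fin.castLEEmb hksm) ↔ (i : ℕ) < n - s := by
      intro i
      simp only [Finset.mem_map, Finset.mem_univ, true_and]
      constructor
      · rintro ⟨j, rfl⟩; exact j.2
      · intro h; exact ⟨⟨i, h⟩, Fin.ext rfl⟩
    set W := (Mu ∪ E).map (Fin.castLEEmb hksm) ∪ (Finset.univ.map (Fin.castLEEmb hksm))ᶜ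
      with hW
    have hWsub : W ⊆ Finset.univ.filter (fun i => zst i ≠ y1 i) := by
      intro i hi
      simp only [Finset.mem_filter, Finset.mem_univ, true_and]
      rw [hW, Finset.mem_union] at hi
      rcases hi with hi | hi
      · rw [Finset.mem_map] at hi
        obtain ⟨j, hj, rfl⟩ := hi
        have hlt : ((Fin.castLEEmb hksm j : Fin m) : ℕ) < n - s := j.2
        have heta : (⟨((Fin.castLEEmb hksm j : Fin m) : ℕ), hlt⟩ : Fin (n - s)) = j :=
          Fin.ext rfl
        have hy1j : y1 (Fin.castLEEmb hksm j) = x (Fin.castLE hkn.le j) := by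
          rw [hy1]
          exact congrArg x (Fin.ext rfl)
        rw [hzval _ hlt, heta, hy1j]
        by_cases hjE : j ∈ E
        · rw [if_pos hjE]; exact othFn_ne _
        · rw [if_neg hjE]
          have hjMu : j ∈ Mu := (Finset.mem_union.1 hj).resolve_right hjE
          rw [hMudef, Finset.mem_filter] at hjMu
          exact hjMu.2
      · rw [Finset.mem_compl, himg] at hi
        rw [hzval2 _ hi]
        exact othFn_ne _
    have hdisj : Disjoint ((Mu ∪ E).map (Fin.castLEEmb hksm))
        (Finset.univ.map (Fin.castLEEmb hksm))ᶜ := by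
      rw [Finset.disjoint_left]
      intro a ha hac
      rw [Finset.mem_compl, himg] at hac
      rw [Finset.mem_map] at ha
      obtain ⟨j, -, rfl⟩ := ha
      exact hac j.2
    have hMuE : (Mu ∪ E).card = Mu.card + E.card := by
      rw [Finset.card_union_of_disjoint]
      rw [Finset.disjoint_left]
      intro a haMu haE
      have hco := hEMu haE
      rw [Finset.mem_compl] at hco
      exact hco haMu
    have hcomplcard : ((Finset.univ.map (Fin.castLEEmb hksm) : Finset (Fin m))ᶜ).card = t := by
      rw [Finset.card_compl, Finset.card_map, Finset.card_univ, Fintype.card_fin,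
        Fintype.card_fin]
      omega
    have hWcard : t + p < W.card := by
      rw [hW, Finset.card_union_of_disjoint hdisj, Finset.card_map, hcomplcard, hMuE]
      omega
    calc t + p < W.card := hWcard
      _ ≤ (Finset.univ.filter (fun i => zst i ≠ y1 i)).card := Finset.card_le_card hWsub
      _ = hammingDist zst y1 := rfl
  -- assemble
  set Fz := Finset.univ.filter (fun z : Fin m → Fin (k+2) => hammingDist z y1 ≤ t + p)
    with hFz
  have hball : ∑ i ∈ Finset.range (t + p + 1), m.choose i * (k + 1) ^ i ≤ Fz.card :=
    hamming_ball_count (k := k + 1) (r := t + p) y1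
  have hnotmem : zst ∉ Fz := by
    rw [hFz, Finset.mem_filter]
    push_neg
    intro _
    omega
  have hsubset : ↑(insert zst Fz) ⊆ (idsBall (k+2) s p x : Set (Fin m → Fin (k+2))) := by
    intro z hz
    rw [Finset.coe_insert, Set.mem_insert_iff] at hz
    rcases hz with rfl | hz
    · exact hzmem
    · rw [Finset.mem_coe, hFz, Finset.mem_filter] at hz
      exact mem_idsBall_of_close hmn hm x z hz.2
  have hle : (insert zst Fz).card ≤ (idsBall (k+2) s p x : Set (Fin m → Fin (k+2))).ncard := by
    rw [← Set.ncard_coe_finset]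
    exact Set.ncard_le_ncard hsubset (Set.toFinite _)
  rw [Finset.card_insert_of_notMem hnotmem] at hle
  have hq1 : k + 2 - 1 = k + 1 := rfl
  rw [hq1]
  omega
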